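/- Let K be a field, f ∈ K[X] monic, g ∈ K[X], s a natural number, and let p_0, …, p_{s−1} ∈ (K[X])[Y] be bivariate polynomials. Set p = Σ_{i<s} p_i · Y^{i·s}. Then (Σ_{i<s} ((Polynomial.eval g p_i) %ₘ f) * ((g^s)^i %ₘ f)) %ₘ f = (Polynomial.eval g p) %ₘ f. (This is the correctness of the baby-step/giant-step strategy in the modular composition theorem: composing each block p_i with g, reducing modulo f, multiplying by the reduced giant-step powers (g^s)^i %ₘ f, summing, and reducing again yields p(X,g(X)) mod f.) -/

import Mathlib

open Polynomial

theorem baby_step_giant_step_correct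
    {K : Type*} [Field K] (f : K[X]) (hf : f.Monic) (g : K[X])
    (s : ℕ) (p : Fin s → Polynomial (Polynomial K))
    (P : Polynomial (Polynomial K))
    (hP : P = ∑ i : Fin s, p i * X ^ ((i : ℕ) * s)) :
    (∑ i : Fin s, ((Polynomial.eval g (p i)) %ₘ f) * ((g ^ s) ^ (i : ℕ) %ₘ f)) %ₘ f
      = (Polynomial.eval g P) %ₘ f := by
  have hmod : ∀ x : K[X], f ∣ x - x %ₘ f := fun x =>
    ⟨x /ₘ f, by rw [modByMonic_eq_sub_mul_div x f]; ring⟩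
  have key : ∀ a b : K[X], f ∣ a - b → a %ₘ f = b %ₘ f := fun a b h => by
    rw [← sub_eq_zero, ← sub_modByMonic, (modByMonic_eq_zero_iff_dvd hf).mpr h]
  apply key
  rw [hP]
  simp only [eval_finset_sum, eval_mul, eval_pow, eval_X, ← Finset.sum_sub_distrib]
  apply Finset.dvd_sum
  intro i _
  have h1 : f ∣ (eval g (p i) %ₘ f) - eval g (p i) := by
    simpa [neg_sub] using (hmod (eval g (p i))).neg_right
  have h2 : f ∣ ((g ^ s) ^ (i : ℕ) %ₘ f) - (g ^ s) ^ (i : ℕ) := by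
    simpa [neg_sub] using (hmod ((g ^ s) ^ (i : ℕ))).neg_right
  have : eval g (p i) %ₘ f * ((g ^ s) ^ (i : ℕ) %ₘ f) - eval g (p i) * g ^ ((i : ℕ) * s)
      = (eval g (p i) %ₘ f - eval g (p i)) * ((g ^ s) ^ (i : ℕ) %ₘ f)
        + eval g (p i) * (((g ^ s) ^ (i : ℕ) %ₘ f) - (g ^ s) ^ (i : ℕ)) := by
    rw [mul_comm (i : ℕ) s, pow_mul]; ring
  rw [this]
  exact dvd_add (h1.mul_right _) ((h2.mul_left _))
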